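/- Let L be a finite set of m lines in ℝ² such that no p of them are mutually parallel and no q of them are concurrent through a common point, where p, q ≥ 2. Then L contains a subset of at least √(m/(p+q)) lines in general position (no two parallel and no three concurrent). -/

import Mathlib

/-- Two lines with distinct (1-dimensional) directions meet in at most one point. -/
lemma stmt3_pt_unique {a b : AffineSubspace ℝ (ℝ × ℝ)}
    (ha : Module.finrank ℝ a.direction = 1) (hb : Module.finrank ℝ b.direction = 1)
    (hd : a.direction ≠ b.direction) {x y : ℝ × ℝ}
    (hxa : x ∈ a) (hxb : x ∈ b) (hya : y ∈ a) (hyb : y ∈ b) : x = y := by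
  by_contra h
  have hv : y - x ≠ 0 := sub_ne_zero.mpr (Ne.symm h)
  have h1 : y - x ∈ a.direction := AffineSubspace.vsub_mem_direction hya hxa
  have h2 : y - x ∈ b.direction := AffineSubspace.vsub_mem_direction hyb hxb
  have key : ∀ (c : AffineSubspace ℝ (ℝ × ℝ)), Module.finrank ℝ c.direction = 1 →
      y - x ∈ c.direction → Submodule.span ℝ {y - x} = c.direction := by
    intro c hc hm
    apply Submodule.eq_of_le_of_finrank_le
    · exact Submodule.span_le.mpr (Set.singleton_subset_iff.mpr hm)
    · rw [hc, finrank_span_singleton hv]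
  exact hd ((key a ha h1).symm.trans (key b hb h2))

def stmt3_gp (S : Finset (AffineSubspace ℝ (ℝ × ℝ))) : Prop :=
  (∀ ℓ₁ ∈ S, ∀ ℓ₂ ∈ S, ℓ₁ ≠ ℓ₂ → ℓ₁.direction ≠ ℓ₂.direction) ∧
  (∀ x : ℝ × ℝ, ∀ T ⊆ S, (∀ ℓ ∈ T, x ∈ ℓ) → T.card ≤ 2)

theorem stmt_3 (p q : ℕ) (hp : 2 ≤ p) (hq : 2 ≤ q)
    (L : Finset (AffineSubspace ℝ (ℝ × ℝ)))
    (hline : ∀ ℓ ∈ L, Module.finrank ℝ ℓ.direction = 1 ∧ (ℓ : Set (ℝ × ℝ)).Nonempty)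
    (hpar : ∀ S ⊆ L,
      (∀ ℓ₁ ∈ S, ∀ ℓ₂ ∈ S, AffineSubspace.direction ℓ₁ = AffineSubspace.direction ℓ₂) →
      S.card < p)
    (hconc : ∀ x : ℝ × ℝ, ∀ S ⊆ L, (∀ ℓ ∈ S, x ∈ ℓ) → S.card < q) :
    ∃ S ⊆ L, Real.sqrt ((L.card : ℝ) / (p + q)) ≤ S.card ∧
      (∀ ℓ₁ ∈ S, ∀ ℓ₂ ∈ S, ℓ₁ ≠ ℓ₂ →
        AffineSubspace.direction ℓ₁ ≠ AffineSubspace.direction ℓ₂) ∧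
      (∀ x : ℝ × ℝ, ∀ T ⊆ S, (∀ ℓ ∈ T, x ∈ ℓ) → T.card ≤ 2) := by
  classical
  -- pick a maximal general-position subset
  have hempty : (∅ : Finset (AffineSubspace ℝ (ℝ × ℝ))) ∈ L.powerset.filter stmt3_gp := by
    simp only [Finset.mem_filter, Finset.mem_powerset]
    refine ⟨Finset.empty_subset _, by simp, fun x T hT _ => ?_⟩
    have := Finset.card_le_card hT
    simpa using this.trans (by simp)
  obtain ⟨S, hS, hmax⟩ := Finset.exists_max_image (L.powerset.filter stmt3_gp)
    Finset.card ⟨∅, hempty⟩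
  simp only [Finset.mem_filter, Finset.mem_powerset] at hS
  obtain ⟨hSL, hgp⟩ := hS
  refine ⟨S, hSL, ?_, hgp.1, hgp.2⟩
  -- canonical intersection point
  set pt : AffineSubspace ℝ (ℝ × ℝ) → AffineSubspace ℝ (ℝ × ℝ) → ℝ × ℝ :=
    fun a b => if h : ∃ z : ℝ × ℝ, z ∈ a ∧ z ∈ b then h.choose else 0 with hpt
  set A : Finset (AffineSubspace ℝ (ℝ × ℝ)) :=
    S.biUnion (fun a => L.filter (fun m => m.direction = a.direction)) with hA
  set B : Finset (AffineSubspace ℝ (ℝ × ℝ)) :=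
    (S ×ˢ S).biUnion (fun ab => L.filter (fun m => pt ab.1 ab.2 ∈ m)) with hB
  have hcover : L ⊆ A ∪ B := by
    intro ℓ hℓL
    by_cases hℓS : ℓ ∈ S
    · exact Finset.mem_union_left _ (Finset.mem_biUnion.mpr
        ⟨ℓ, hℓS, Finset.mem_filter.mpr ⟨hℓL, rfl⟩⟩)
    · have hnotgp : ¬ stmt3_gp (insert ℓ S) := by
        intro hgp'
        have hmem : insert ℓ S ∈ L.powerset.filter stmt3_gp := by
          simp only [Finset.mem_filter, Finset.mem_powerset]
          exact ⟨Finset.insert_subset hℓL hSL, hgp'⟩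
        have := hmax _ hmem
        rw [Finset.card_insert_of_notMem hℓS] at this
        omega
      rcases not_and_or.mp hnotgp with hcase | hcase
      · push_neg at hcase
        obtain ⟨a, ha, b, hb, hab, hdir⟩ := hcase
        rcases Finset.mem_insert.mp ha with rfl | haS
        · have hbS : b ∈ S := by
            rcases Finset.mem_insert.mp hb with rfl | h; · exact absurd rfl hab
            · exact h
          exact Finset.mem_union_left _ (Finset.mem_biUnion.mpr
            ⟨b, hbS, Finset.mem_filter.mpr ⟨hℓL, hdir⟩⟩)
        · rcases Finset.mem_insert.mp hb with rfl | hbS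
          · exact Finset.mem_union_left _ (Finset.mem_biUnion.mpr
              ⟨a, haS, Finset.mem_filter.mpr ⟨hℓL, hdir.symm⟩⟩)
          · exact absurd hdir (hgp.1 a haS b hbS hab)
      · push_neg at hcase
        obtain ⟨x, T, hTsub, hTx, hTcard⟩ := hcase
        have hℓT : ℓ ∈ T := by
          by_contra hℓT
          have : T ⊆ S := fun m hm => by
            rcases Finset.mem_insert.mp (hTsub hm) with rfl | h
            · exact absurd hm hℓT
            · exact h
          exact absurd (hgp.2 x T this hTx) (by omega)
        have hT'sub : T.erase ℓ ⊆ S := by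
          intro m hm
          rcases Finset.mem_insert.mp (hTsub (Finset.mem_of_mem_erase hm)) with rfl | h
          · exact absurd rfl (Finset.ne_of_mem_erase hm)
          · exact h
        have hT'card : 1 < (T.erase ℓ).card := by
          rw [Finset.card_erase_of_mem hℓT]; omega
        obtain ⟨a, haT, b, hbT, hab⟩ := Finset.one_lt_card.mp hT'card
        have haS := hT'sub haT
        have hbS := hT'sub hbT
        have hxa : x ∈ a := hTx a (Finset.mem_of_mem_erase haT)
        have hxb : x ∈ b := hTx b (Finset.mem_of_mem_erase hbT)
        have hxℓ : x ∈ ℓ := hTx ℓ hℓT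
        have hdab : a.direction ≠ b.direction := hgp.1 a haS b hbS hab
        have hex : ∃ z : ℝ × ℝ, z ∈ a ∧ z ∈ b := ⟨x, hxa, hxb⟩
        have hptx : pt a b = x := by
          rw [hpt]
          simp only [hex, dif_pos]
          exact stmt3_pt_unique (hline a (hSL haS)).1 (hline b (hSL hbS)).1 hdab
            hex.choose_spec.1 hex.choose_spec.2 hxa hxb
        refine Finset.mem_union_right _ (Finset.mem_biUnion.mpr
          ⟨(a, b), Finset.mem_product.mpr ⟨haS, hbS⟩,
            Finset.mem_filter.mpr ⟨hℓL, ?_⟩⟩)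
        rw [hptx]; exact hxℓ
  -- cardinality counting
  have hAcard : A.card ≤ S.card * (p - 1) := by
    refine (Finset.card_biUnion_le).trans ?_
    calc ∑ a ∈ S, (L.filter (fun m => m.direction = a.direction)).card
        ≤ ∑ _a ∈ S, (p - 1) := by
          refine Finset.sum_le_sum fun a _ => ?_
          have hlt : (L.filter (fun m => m.direction = a.direction)).card < p := by
            apply hpar _ (Finset.filter_subset (fun m => m.direction = a.direction) L)
            intro m₁ hm₁ m₂ hm₂
            have e1 := (Finset.mem_filter.mp hm₁).2
            have e2 := (Finset.mem_filter.mp hm₂).2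
            rw [e1, e2]
          omega
      _ = S.card * (p - 1) := by rw [Finset.sum_const, smul_eq_mul]
  have hBcard : B.card ≤ S.card * S.card * (q - 1) := by
    refine (Finset.card_biUnion_le).trans ?_
    calc ∑ ab ∈ S ×ˢ S, (L.filter (fun m => pt ab.1 ab.2 ∈ m)).card
        ≤ ∑ _ab ∈ S ×ˢ S, (q - 1) := by
          refine Finset.sum_le_sum fun ab _ => ?_
          have := hconc (pt ab.1 ab.2) _ (Finset.filter_subset _ _)
            (fun m hm => (Finset.mem_filter.mp hm).2)
          omega
      _ = S.card * S.card * (q - 1) := by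
          rw [Finset.sum_const, smul_eq_mul, Finset.card_product]
  have hLcard : L.card ≤ (p + q) * S.card ^ 2 := by
    have h1 : L.card ≤ A.card + B.card :=
      (Finset.card_le_card hcover).trans (Finset.card_union_le _ _)
    have hss : S.card ≤ S.card * S.card := by
      rcases Nat.eq_zero_or_pos S.card with h | h
      · omega
      · exact Nat.le_mul_of_pos_left _ h
    have h2 : S.card * (p - 1) ≤ S.card * S.card * (p - 1) :=
      Nat.mul_le_mul_right _ hss
    have h3 : S.card * S.card * (p - 1) + S.card * S.card * (q - 1) ≤ (p + q) * S.card ^ 2 :=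
      calc S.card * S.card * (p - 1) + S.card * S.card * (q - 1)
          ≤ S.card * S.card * p + S.card * S.card * q :=
            Nat.add_le_add (Nat.mul_le_mul_left _ (Nat.sub_le _ _))
              (Nat.mul_le_mul_left _ (Nat.sub_le _ _))
        _ = (p + q) * S.card ^ 2 := by ring
    omega
  -- the real inequality
  have hpq : (0 : ℝ) < (p : ℝ) + (q : ℝ) := by
    have h2p : (2 : ℝ) ≤ (p : ℝ) := by exact_mod_cast hp
    have h0q : (0 : ℝ) ≤ (q : ℝ) := Nat.cast_nonneg q
    linarith
  have hdiv : (L.card : ℝ) / ((p : ℝ) + (q : ℝ)) ≤ (S.card : ℝ) ^ 2 := by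
    rw [div_le_iff₀ hpq]
    have hcast : (L.card : ℝ) ≤ ((p : ℝ) + (q : ℝ)) * (S.card : ℝ) ^ 2 := by
      exact_mod_cast hLcard
    linarith [hcast, mul_comm ((p : ℝ) + (q : ℝ)) ((S.card : ℝ) ^ 2)]
  calc Real.sqrt ((L.card : ℝ) / ((p : ℝ) + (q : ℝ)))
      ≤ Real.sqrt ((S.card : ℝ) ^ 2) := Real.sqrt_le_sqrt hdiv
    _ = (S.card : ℝ) := Real.sqrt_sq (Nat.cast_nonneg _)
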